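/- Let S = {x ∈ ℝⁿ : h(x) ≥ 0} for a continuously differentiable function h : ℝⁿ → ℝ, and let x(t) solve ẋ = F(x) with F continuous and solutions unique in forward time. If there exists a Lipschitz continuous, strictly increasing function α : ℝ → ℝ with α(0) = 0 such that d/dt h(x(t)) ≥ −α(h(x(t))) for all t whenever x(t) is in the domain, then x(0) ∈ S implies x(t) ∈ S for all t ≥ 0. -/

import Mathlib

/-- Forward invariance of the superlevel set S = {x : h x ≥ 0} under a
control-barrier-function condition, for a trajectory of ẋ = F(x) with F
continuous and solutions unique in forward time. -/
theorem cbf_forward_invariance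
    (n : ℕ)
    (h : EuclideanSpace ℝ (Fin n) → ℝ) (hh : ContDiff ℝ 1 h)
    (F : EuclideanSpace ℝ (Fin n) → EuclideanSpace ℝ (Fin n))
    (hF : Continuous F)
    (huniq : ∀ y z : ℝ → EuclideanSpace ℝ (Fin n),
      (∀ t, HasDerivAt y (F (y t)) t) → (∀ t, HasDerivAt z (F (z t)) t) →
      y 0 = z 0 → ∀ t ≥ (0:ℝ), y t = z t)
    (x : ℝ → EuclideanSpace ℝ (Fin n))
    (hx : ∀ t, HasDerivAt x (F (x t)) t)
    (α : ℝ → ℝ) (K : NNReal) (hαlip : LipschitzWith K α)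
    (hαmono : StrictMono α) (hα0 : α 0 = 0)
    (hcbf : ∀ t : ℝ, deriv (fun s => h (x s)) t ≥ -α (h (x t)))
    (h0 : h (x 0) ≥ 0) :
    ∀ t ≥ (0:ℝ), h (x t) ≥ 0 := by
  set g : ℝ → ℝ := fun s => h (x s) with hg_def
  have hgdiff : ∀ t, DifferentiableAt ℝ g t := fun t =>
    ((hh.differentiable one_ne_zero (x t)).hasFDerivAt.comp_hasDerivAt t (hx t)).differentiableAt
  have hgcont : Continuous g := by
    rw [continuous_iff_continuousAt]; exact fun t => (hgdiff t).continuousAt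
  intro t1 ht1
  by_contra hneg
  push_neg at hneg
  -- the set of times in [0,t1] where g ≥ 0
  set A : Set ℝ := Set.Icc 0 t1 ∩ g ⁻¹' Set.Ici 0 with hA
  have hAcomp : IsCompact A :=
    isCompact_Icc.inter_right (isClosed_Ici.preimage hgcont)
  have hAne : A.Nonempty := ⟨0, ⟨le_rfl, ht1⟩, h0⟩
  obtain ⟨hts_mem, -⟩ := hAcomp.sSup_mem hAne |>.imp id (fun h => h)
  have htsA : sSup A ∈ A := hAcomp.sSup_mem hAne
  set ts := sSup A with hts
  obtain ⟨⟨hts0, htst1⟩, htsg⟩ := htsA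
  have htslt : ts < t1 := lt_of_le_of_ne htst1 (by
    intro heq
    have : g t1 ≥ 0 := heq ▸ htsg
    exact absurd this (not_le.mpr hneg))
  -- for s in (ts, t1], g s < 0
  have hgmid : ∀ s, s ∈ Set.Ioc ts t1 → g s < 0 := by
    intro s ⟨hs1, hs2⟩
    by_contra hge
    push_neg at hge
    have hsA : s ∈ A := ⟨⟨le_trans hts0 hs1.le, hs2⟩, hge⟩
    exact absurd (le_csSup hAcomp.bddAbove hsA) (not_le.mpr hs1)
  -- g ≤ 0 on [ts, t1]
  have hgle : ∀ s ∈ Set.Icc ts t1, g s ≤ 0 := by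
    intro s ⟨hs1, hs2⟩
    rcases eq_or_lt_of_le hs1 with heq | hlt
    · -- g ts ≤ 0 by right continuity
      subst heq
      have htend : Filter.Tendsto g (nhdsWithin ts (Set.Ioi ts)) (nhds (g ts)) :=
        (hgcont.continuousAt).continuousWithinAt
      refine le_of_tendsto htend ?_
      filter_upwards [Ioc_mem_nhdsGT_of_mem ⟨le_rfl, htslt⟩] with u hu
      exact (hgmid u hu).le
    · exact (hgmid s ⟨hlt, hs2⟩).le
  -- hence deriv g ≥ 0 on [ts, t1], so g monotone there
  have hmono : MonotoneOn g (Set.Icc ts t1) := by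
    apply monotoneOn_of_deriv_nonneg (convex_Icc ts t1) hgcont.continuousOn
    · intro s hs
      exact (hgdiff s).differentiableWithinAt
    · intro s hs
      rw [interior_Icc] at hs
      have h1 : α (g s) ≤ 0 := by
        rw [← hα0]
        exact hαmono.le_iff_le.mpr (hgle s ⟨hs.1.le, hs.2.le⟩)
      linarith [hcbf s]
  have hts0' : g ts ≤ g t1 :=
    hmono ⟨le_rfl, htslt.le⟩ ⟨htslt.le, le_rfl⟩ htslt.le
  have h1 : (0:ℝ) ≤ g ts := htsg
  have h2 : g t1 < 0 := hneg
  linarith
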